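/- Let χ be an (r+1)-signotope on [n] and let c be an element of [n]. Then the contraction χ_{↓c}, defined on r-subsets M of [n] \ {c} by χ_{↓c}(M) = χ(M ∪ {c}), is an r-signotope on [n] \ {c} (after identifying [n] \ {c} with an initial segment of natural numbers by the order-preserving bijection). -/

import Mathlib

/-- Number of sign changes in a list of signs (`true` = `+`, `false` = `-`). -/
def signChanges (l : List Bool) : Nat :=
  (l.zip l.tail).countP (fun p => p.1 != p.2)

/-- The sequence of signs obtained from the set `A` by applying `χ` to `A` minus each of its
elements, deleted in increasing order. -/
def delSeq (chi : Finset Nat -> Bool) (A : Finset Nat) : List Bool :=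
  (List.range A.card).map (fun i => chi (((A.sort (fun a b => a <= b)).eraseIdx i).toFinset))

/-- `chi` is an `r`-signotope on ground set `S`: it is a sign map on `r`-subsets such that for
every `(r+1)`-subset `A ⊆ S` the sign sequence `delSeq chi A` has at most one sign change. -/
def IsSignotopeOn (r : Nat) (S : Finset Nat) (chi : Finset Nat -> Bool) : Prop :=
  forall A : Finset Nat, A ⊆ S -> A.card = r + 1 -> signChanges (delSeq chi A) <= 1

lemma signChanges_cons_cons (a b : Bool) (t : List Bool) :
    signChanges (a :: b :: t) = signChanges (b :: t) + (if (a != b) = true then 1 else 0) := by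
  simp [signChanges, List.countP_cons]

lemma sc_aux : ∀ (t : List Bool) (i : Nat),
    (∀ a, signChanges (a :: t.eraseIdx i) ≤ signChanges (a :: t)) ∧
    signChanges (t.eraseIdx i) ≤ signChanges t := by
  intro t
  induction t with
  | nil => intro i; simp [List.eraseIdx]
  | cons b t ih =>
    intro i
    cases i with
    | zero =>
      constructor
      · intro a
        cases t with
        | nil => simp [signChanges]
        | cons y t' =>
          simp only [List.eraseIdx]
          rw [signChanges_cons_cons a y t', signChanges_cons_cons a b (y :: t'),
            signChanges_cons_cons b y t']
          have : (if (a != y) = true then 1 else 0) ≤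
              (if (a != b) = true then 1 else 0) + (if (b != y) = true then 1 else 0) := by
            cases a <;> cases b <;> cases y <;> simp
          omega
      · cases t with
        | nil => simp [signChanges, List.eraseIdx]
        | cons y t' =>
          simp only [List.eraseIdx]
          rw [signChanges_cons_cons b y t']
          omega
    | succ i =>
      have h1 := (ih i).1
      constructor
      · intro a
        show signChanges (a :: b :: t.eraseIdx i) ≤ signChanges (a :: b :: t)
        rw [signChanges_cons_cons a b (t.eraseIdx i), signChanges_cons_cons a b t]
        have := h1 b
        omega
      · exact h1 b

lemma signChanges_eraseIdx (l : List Bool) (i : Nat) :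
    signChanges (l.eraseIdx i) ≤ signChanges l := (sc_aux l i).2

lemma map_eraseIdx {α β : Type*} (f : α → β) :
    ∀ (l : List α) (k : Nat), (l.map f).eraseIdx k = (l.eraseIdx k).map f := by
  intro l
  induction l with
  | nil => intro k; simp
  | cons a t ih =>
    intro k
    cases k with
    | zero => simp [List.eraseIdx]
    | succ k => simp [List.eraseIdx, ih k]

lemma range_eraseIdx (m k : Nat) (hk : k < m + 1) :
    (List.range (m + 1)).eraseIdx k = (List.range m).map (fun i => if i < k then i else i + 1) := by
  apply List.ext_getElem
  · rw [List.length_eraseIdx_of_lt (by simpa using hk)]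
    simp
  · intro i h1 h2
    rw [List.getElem_eraseIdx]
    simp only [List.getElem_map, List.getElem_range]
    split <;> simp

/-- Erasing the `i`-th element of the sorted list of `s` gives `s.erase (i-th element)`. -/
lemma sort_eraseIdx_toFinset (s : Finset Nat) (i : Nat)
    (hi : i < (s.sort (fun a b => a <= b)).length) :
    ((s.sort (fun a b => a <= b)).eraseIdx i).toFinset
      = s.erase ((s.sort (fun a b => a <= b))[i]) := by
  set l := s.sort (fun a b => a <= b) with hl
  have hnd : l.Nodup := Finset.sort_nodup s _
  have h1 : l.eraseIdx i = l.erase l[i] := by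
    have h2 := (List.erase_eq_eraseIdx_of_idxOf (l := l) (a := l[i]'hi) rfl).symm
    rwa [List.Nodup.idxOf_getElem hnd i hi] at h2
  rw [h1]
  ext x
  rw [List.mem_toFinset, hnd.mem_erase_iff, Finset.mem_erase, ← Finset.mem_sort (fun a b => a <= b)]

/-- the contraction of an `(r+1)`-signotope on `[n]` at an element `c`,
`M ↦ χ(M ∪ {c})` for `r`-subsets `M` of `[n] \ {c}`, is an `r`-signotope on `[n] \ {c}`
(which is order-isomorphic to an initial segment of the naturals). -/
theorem contraction_of_signotope (r n : Nat) (hr : 1 <= r) (hrn : r + 1 <= n)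
    (chi : Finset Nat -> Bool) (h : IsSignotopeOn (r + 1) (Finset.Icc 1 n) chi)
    (c : Nat) (hc : c ∈ Finset.Icc 1 n) :
    IsSignotopeOn r ((Finset.Icc 1 n).erase c) (fun M => chi (insert c M)) := by
  intro A hA hAcard
  have hcA : c ∉ A := fun hmem => (Finset.mem_erase.mp (hA hmem)).1 rfl
  set B : Finset Nat := insert c A with hB
  have hBsub : B ⊆ Finset.Icc 1 n := by
    intro x hx
    rcases Finset.mem_insert.mp hx with h' | h'
    · subst h'; exact hc
    · exact (Finset.mem_erase.mp (hA h')).2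
  have hBcard : B.card = r + 2 := by
    rw [Finset.card_insert_of_notMem hcA, hAcard]
  have hmain := h B hBsub hBcard
  set sB := B.sort (fun a b => a <= b) with hsB
  have hlenB : sB.length = r + 2 := by rw [hsB, Finset.length_sort, hBcard]
  have hcB : c ∈ sB := by
    rw [hsB, Finset.mem_sort]; exact Finset.mem_insert_self _ _
  set k := sB.idxOf c with hk
  have hklen : k < sB.length := List.idxOf_lt_length_iff.mpr hcB
  have hklt : k < r + 2 := by omega
  have hkc : sB[k]'hklen = c := List.getElem_idxOf hklen
  have herase : sB.eraseIdx k = sB.erase c := (List.erase_eq_eraseIdx_of_idxOf hk.symm).symm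
  -- the sorted list of A is sB with c erased
  have hsA : A.sort (fun a b => a <= b) = sB.erase c := by
    have : IsAntisymm Nat (fun a b => a <= b) := ⟨fun a b => Nat.le_antisymm⟩
    refine (fun hp h1 h2 => List.Perm.eq_of_pairwise' (r := fun a b => a <= b) h1 h2 hp) ?_ ?_ ?_
    · apply Multiset.coe_eq_coe.mp
      rw [← Multiset.coe_erase, hsB, Finset.sort_eq, Finset.sort_eq, hB,
        Finset.insert_val_of_notMem hcA, Multiset.erase_cons_head]
    · exact Finset.pairwise_sort _ _
    · exact List.Pairwise.sublist List.erase_sublist (Finset.pairwise_sort _ _)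
  have hlenA : (A.sort (fun a b => a <= b)).length = r + 1 := by
    rw [Finset.length_sort, hAcard]
  -- the contracted delete sequence is the big delete sequence with index k erased
  have key : delSeq (fun M => chi (insert c M)) A = (delSeq chi B).eraseIdx k := by
    rw [delSeq, delSeq, hBcard, hAcard, ← hsB,
      map_eraseIdx, range_eraseIdx (r + 1) k hklt, List.map_map]
    apply List.map_congr_left
    intro i hi
    have hi' : i < r + 1 := List.mem_range.mp hi
    -- the index in sB corresponding to index i in sA
    have hj : (if i < k then i else i + 1) < sB.length := by
      rw [hlenB]; split <;> omega
    have hiA : i < (A.sort (fun a b => a <= b)).length := by omega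
    have hgetA : (A.sort (fun a b => a <= b))[i]'hiA = sB[if i < k then i else i + 1]'hj := by
      have : (A.sort (fun a b => a <= b))[i]'hiA = (sB.eraseIdx k)[i]'(by
          rw [List.length_eraseIdx_of_lt hklen]; omega) := by
        congr 1
        rw [hsA, herase]
      rw [this, List.getElem_eraseIdx]
      split <;> rename_i h' <;> simp [h']
    simp only [Function.comp_apply]
    congr 1
    rw [sort_eraseIdx_toFinset A i hiA, sort_eraseIdx_toFinset B (if i < k then i else i + 1) hj,
      ← hgetA]
    set e := (A.sort (fun a b => a <= b))[i]'hiA with he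
    have heA : e ∈ A := by
      rw [← Finset.mem_sort (fun a b => a <= b)]
      exact List.getElem_mem _
    have hec : c ≠ e := fun h' => hcA (h' ▸ heA)
    rw [hB, Finset.erase_insert_of_ne hec]
  rw [key]
  exact le_trans (signChanges_eraseIdx _ _) hmain
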